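/- For every x ∈ ℝ, the Legendre–Fenchel transform of L satisfies sup over a ∈ [0, λ m̄] of (x a - L(a)) = H(x). -/

import Mathlib

open MeasureTheory Filter Set

/-- For every `x ∈ ℝ`, the Legendre–Fenchel transform of `L` satisfies
`sup_{a ∈ [0, λ m̄]} (x a - L(a)) = H(x)`. -/
theorem stmt_6 (f F G H L Ginv : ℝ → ℝ) (mbar lam : ℝ)
    (hf_cont : Continuous f)
    (hf_nonpos : ∀ p ≤ (0 : ℝ), f p = 0)
    (hf_pos : ∀ p : ℝ, 0 < p → 0 < f p)
    (hf_int : (∫ p in Set.Ioi (0 : ℝ), f p) = 1)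
    (hf_tail : Filter.Tendsto (fun p : ℝ => p ^ 3 * f p) Filter.atTop (nhds 0))
    (hmean_int : MeasureTheory.IntegrableOn (fun p : ℝ => p * f p) (Set.Ioi 0))
    (hmbar : mbar = ∫ p in Set.Ioi (0 : ℝ), p * f p)
    (hF : ∀ b : ℝ, F b = ∫ p in (0 : ℝ)..b, f p)
    (hG : ∀ b : ℝ, G b = ∫ p in (0 : ℝ)..b, p * f p)
    (hlam : 0 < lam)
    (hGbij : Set.BijOn G (Set.Ici 0) (Set.Ico 0 mbar))
    (hGinv : ∀ a ∈ Set.Ico (0 : ℝ) mbar, Ginv a ∈ Set.Ici (0 : ℝ) ∧ G (Ginv a) = a)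
    (hL : ∀ a ∈ Set.Ico (0 : ℝ) (lam * mbar), L a = -lam * F (Ginv (a / lam)))
    (hLend : L (lam * mbar) = -lam)
    (hHneg : ∀ x < (0 : ℝ), H x = -(lam * x) * ∫ p in (0 : ℝ)..(-1 / x), F p)
    (hHpos : ∀ x : ℝ, 0 ≤ x → H x = lam * (1 + x * mbar))
    (x : ℝ) :
    sSup ((fun a : ℝ => x * a - L a) '' Set.Icc 0 (lam * mbar)) = H x := by
  -- basic positivity facts
  have hf_nonneg : ∀ p : ℝ, 0 ≤ f p := by
    intro p
    rcases le_or_gt p 0 with h | h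
    · rw [hf_nonpos p h]
    · exact (hf_pos p h).le
  have hpf_nonneg : ∀ p : ℝ, p ∈ Set.Ioi (0:ℝ) → 0 ≤ p * f p := by
    intro p hp; exact mul_nonneg (le_of_lt hp) (hf_nonneg p)
  have hmbar_nonneg : 0 ≤ mbar := by
    rw [hmbar]; exact setIntegral_nonneg measurableSet_Ioi hpf_nonneg
  have hlm_nonneg : 0 ≤ lam * mbar := mul_nonneg hlam.le hmbar_nonneg
  have hf_integrable : IntegrableOn f (Set.Ioi 0) := by
    by_contra h
    rw [MeasureTheory.integral_undef h] at hf_int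
    norm_num at hf_int
  have hfint : ∀ a b : ℝ, IntervalIntegrable f volume a b :=
    fun a b => hf_cont.intervalIntegrable a b
  have hpf_cont : Continuous (fun p : ℝ => p * f p) := continuous_id.mul hf_cont
  have hpfint : ∀ a b : ℝ, IntervalIntegrable (fun p : ℝ => p * f p) volume a b :=
    fun a b => hpf_cont.intervalIntegrable a b
  -- F ≤ 1 on [0, ∞)
  have hF_le_one : ∀ b : ℝ, 0 ≤ b → F b ≤ 1 := by
    intro b hb
    rw [hF b, intervalIntegral.integral_of_le hb, ← hf_int]
    exact setIntegral_mono_set hf_integrable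
      (Filter.Eventually.of_forall hf_nonneg)
      (HasSubset.Subset.eventuallyLE Set.Ioc_subset_Ioi_self)
  -- difference formulas
  have hFdiff : ∀ b c : ℝ, F b - F c = ∫ p in c..b, f p := by
    intro b c
    rw [hF b, hF c]
    exact intervalIntegral.integral_interval_sub_left (hfint 0 b) (hfint 0 c)
  have hGdiff : ∀ b c : ℝ, G b - G c = ∫ p in c..b, p * f p := by
    intro b c
    rw [hG b, hG c]
    exact intervalIntegral.integral_interval_sub_left (hpfint 0 b) (hpfint 0 c)
  -- endpoint value
  have hend_mem : (lam * mbar) ∈ Set.Icc (0:ℝ) (lam * mbar) := ⟨hlm_nonneg, le_rfl⟩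
  rcases lt_or_ge x 0 with hx | hx
  · -- x < 0 case
    set B : ℝ := -1 / x with hBdef
    have hBpos : 0 < B := div_pos_iff.2 (Or.inr ⟨by norm_num, hx⟩)
    have hx0 : x ≠ 0 := ne_of_lt hx
    have hxB : x * B = -1 := by
      rw [hBdef]; field_simp
    -- tail formulas: 1 - F B = ∫_{Ioi B} f, mbar - G B = ∫_{Ioi B} p f
    have htailF : 1 - F B = ∫ p in Set.Ioi B, f p := by
      rw [← hf_int, hF B, intervalIntegral.integral_of_le hBpos.le]
      rw [← Set.Ioc_union_Ioi_eq_Ioi hBpos.le,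
        setIntegral_union (Set.Ioc_disjoint_Ioi le_rfl) measurableSet_Ioi
          (hf_integrable.mono_set Set.Ioc_subset_Ioi_self)
          (hf_integrable.mono_set (Set.Ioi_subset_Ioi hBpos.le))]
      ring
    have htailG : mbar - G B = ∫ p in Set.Ioi B, p * f p := by
      rw [hmbar, hG B, intervalIntegral.integral_of_le hBpos.le]
      rw [← Set.Ioc_union_Ioi_eq_Ioi hBpos.le,
        setIntegral_union (Set.Ioc_disjoint_Ioi le_rfl) measurableSet_Ioi
          (hmean_int.mono_set Set.Ioc_subset_Ioi_self)
          (hmean_int.mono_set (Set.Ioi_subset_Ioi hBpos.le))]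
      ring
    -- key tail inequality: B * (1 - F B) ≤ mbar - G B
    have htail_ineq : B * (1 - F B) ≤ mbar - G B := by
      rw [htailF, htailG, ← MeasureTheory.integral_const_mul]
      apply setIntegral_mono_on
      · exact (hf_integrable.mono_set (Set.Ioi_subset_Ioi hBpos.le)).const_mul B
      · exact hmean_int.mono_set (Set.Ioi_subset_Ioi hBpos.le)
      · exact measurableSet_Ioi
      · intro p hp
        exact mul_le_mul_of_nonneg_right (le_of_lt hp) (hf_nonneg p)
    -- key pointwise inequality: for all b, x * G b + F b ≤ x * G B + F B
    have hkey : ∀ b : ℝ, x * G b + F b ≤ x * G B + F B := by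
      intro b
      have hrw : x * G b + F b - (x * G B + F B)
          = ∫ p in B..b, (x * p + 1) * f p := by
        have : x * G b + F b - (x * G B + F B) = x * (G b - G B) + (F b - F B) := by ring
        rw [this, hFdiff b B, hGdiff b B, ← intervalIntegral.integral_const_mul,
          ← intervalIntegral.integral_add ((hpfint B b).const_mul x) (hfint B b)]
        congr 1 with p
        ring
      have hle : (∫ p in B..b, (x * p + 1) * f p) ≤ 0 := by
        rcases le_total B b with hbB | hbB
        · -- integrand ≤ 0 on [B, b]
          have : 0 ≤ ∫ p in B..b, -((x * p + 1) * f p) := by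
            apply intervalIntegral.integral_nonneg hbB
            intro p hp
            have hpB : B ≤ p := hp.1
            have : x * p + 1 ≤ 0 := by
              have := mul_le_mul_of_nonpos_left hpB hx.le
              rw [hxB] at this
              linarith
            nlinarith [hf_nonneg p]
          rw [intervalIntegral.integral_neg] at this
          linarith
        · -- integrand ≥ 0 on [b, B], reversed orientation
          rw [intervalIntegral.integral_symm b B]
          have : 0 ≤ ∫ p in b..B, (x * p + 1) * f p := by
            apply intervalIntegral.integral_nonneg hbB
            intro p hp
            rcases le_or_gt p 0 with hp0 | hp0
            · rw [hf_nonpos p hp0]; ring_nf; simp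
            · have hpB : p ≤ B := hp.2
              have : -1 ≤ x * p := by
                have := mul_le_mul_of_nonpos_left hpB hx.le
                rw [hxB] at this
                linarith
              nlinarith [hf_nonneg p]
          linarith
      linarith [hrw ▸ hle]
    -- H x = lam * (x * G B + F B) via integration by parts
    have hFderiv : ∀ b : ℝ, HasDerivAt F (f b) b := by
      intro b
      have : HasDerivAt (fun u => ∫ p in (0:ℝ)..u, f p) (f b) b :=
        intervalIntegral.integral_hasDerivAt_right (hfint 0 b)
          (hf_cont.stronglyMeasurableAtFilter _ _) hf_cont.continuousAt
      have hfun : F = fun u => ∫ p in (0:ℝ)..u, f p := funext hF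
      rw [hfun]; exact this
    have hGderiv : ∀ b : ℝ, HasDerivAt G (b * f b) b := by
      intro b
      have : HasDerivAt (fun u => ∫ p in (0:ℝ)..u, p * f p) (b * f b) b :=
        intervalIntegral.integral_hasDerivAt_right (hpfint 0 b)
          (hpf_cont.stronglyMeasurableAtFilter _ _) hpf_cont.continuousAt
      have hfun : G = fun u => ∫ p in (0:ℝ)..u, p * f p := funext hG
      rw [hfun]; exact this
    have hF0 : F 0 = 0 := by rw [hF 0, intervalIntegral.integral_same]
    have hG0 : G 0 = 0 := by rw [hG 0, intervalIntegral.integral_same]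
    have hparts : (∫ p in (0:ℝ)..B, F p) = B * F B - G B := by
      have hφ : ∀ p ∈ Set.uIcc (0:ℝ) B, HasDerivAt (fun u => u * F u - G u) (F p) p := by
        intro p _
        have h1 : HasDerivAt (fun u : ℝ => u * F u) (1 * F p + p * f p) p :=
          (hasDerivAt_id p).mul (hFderiv p)
        have h2 : HasDerivAt (fun u => u * F u - G u) (1 * F p + p * f p - p * f p) p :=
          h1.sub (hGderiv p)
        convert h2 using 1
        ring
      have hFcont : Continuous F := by
        have hfun : F = fun u => ∫ p in (0:ℝ)..u, f p := funext hF
        rw [hfun]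
        exact intervalIntegral.continuous_primitive hfint 0
      have := intervalIntegral.integral_eq_sub_of_hasDerivAt hφ
        (hFcont.intervalIntegrable 0 B)
      rw [this, hF0, hG0]
      ring
    have hHval : H x = lam * (x * G B + F B) := by
      rw [hHneg x hx, hparts]
      linear_combination (-(lam * F B)) * hxB
    apply IsGreatest.csSup_eq
    constructor
    · -- the max is attained at a = lam * G B
      have hGB_mem : G B ∈ Set.Ico (0:ℝ) mbar := hGbij.mapsTo hBpos.le
      refine ⟨lam * G B, ⟨mul_nonneg hlam.le hGB_mem.1, ?_⟩, ?_⟩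
      · exact mul_le_mul_of_nonneg_left hGB_mem.2.le hlam.le
      · have hmemIco : lam * G B ∈ Set.Ico (0:ℝ) (lam * mbar) :=
          ⟨mul_nonneg hlam.le hGB_mem.1, by
            exact (mul_lt_mul_iff_right₀ hlam).2 hGB_mem.2⟩
        have hdiv : lam * G B / lam = G B := by field_simp
        have hGinvGB : Ginv (G B) = B := by
          have h := hGinv (G B) hGB_mem
          exact hGbij.injOn h.1 hBpos.le (h.2)
        show x * (lam * G B) - L (lam * G B) = H x
        rw [hL _ hmemIco, hdiv, hGinvGB, hHval]
        ring
    · rintro y ⟨a, ha, rfl⟩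
      rcases eq_or_lt_of_le ha.2 with heq | hlt
      · -- endpoint a = lam * mbar
        subst heq
        show x * (lam * mbar) - L (lam * mbar) ≤ H x
        rw [hLend, hHval]
        have h2 : x * (B * (1 - F B)) = -(1 - F B) := by
          rw [← mul_assoc, hxB]; ring
        have h1 : x * mbar + 1 ≤ x * G B + F B := by
          have h3 := mul_le_mul_of_nonpos_left htail_ineq hx.le
          rw [h2] at h3
          nlinarith
        nlinarith [mul_le_mul_of_nonneg_left h1 hlam.le]
      · -- interior point
        have haIco : a ∈ Set.Ico (0:ℝ) (lam * mbar) := ⟨ha.1, hlt⟩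
        have hadiv : a / lam ∈ Set.Ico (0:ℝ) mbar := by
          constructor
          · exact div_nonneg ha.1 hlam.le
          · rw [div_lt_iff₀ hlam]
            linarith [hlt]
        obtain ⟨hb_mem, hGb⟩ := hGinv (a / lam) hadiv
        set b := Ginv (a / lam) with hbdef
        have haeq : a = lam * G b := by
          rw [hGb]; field_simp
        show x * a - L a ≤ H x
        rw [hL a haIco, ← hbdef, hHval, haeq]
        nlinarith [mul_le_mul_of_nonneg_left (hkey b) hlam.le]
  · -- x ≥ 0 case
    rw [hHpos x hx]
    apply IsGreatest.csSup_eq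
    constructor
    · refine ⟨lam * mbar, hend_mem, ?_⟩
      show x * (lam * mbar) - L (lam * mbar) = lam * (1 + x * mbar)
      rw [hLend]
      ring
    · rintro y ⟨a, ha, rfl⟩
      rcases eq_or_lt_of_le ha.2 with heq | hlt
      · subst heq
        show x * (lam * mbar) - L (lam * mbar) ≤ lam * (1 + x * mbar)
        rw [hLend]
        have : x * (lam * mbar) - -lam = lam * (1 + x * mbar) := by ring
        linarith
      · have haIco : a ∈ Set.Ico (0:ℝ) (lam * mbar) := ⟨ha.1, hlt⟩
        have hadiv : a / lam ∈ Set.Ico (0:ℝ) mbar := by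
          constructor
          · exact div_nonneg ha.1 hlam.le
          · rw [div_lt_iff₀ hlam]; linarith [hlt]
        obtain ⟨hb_mem, _⟩ := hGinv (a / lam) hadiv
        have hFle : F (Ginv (a / lam)) ≤ 1 := hF_le_one _ hb_mem
        show x * a - L a ≤ lam * (1 + x * mbar)
        rw [hL a haIco]
        have hxa : x * a ≤ x * (lam * mbar) := mul_le_mul_of_nonneg_left ha.2 hx
        nlinarith [mul_le_mul_of_nonneg_left hFle hlam.le]
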